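/- Let A, B ∈ M_n(ℂ) and define A₂(t) := exp(−itA/2) · ( (1/2)(exp(−itB) A exp(itB) − A) + exp(−itB)(exp(−itA/2) B exp(itA/2) − B) exp(itB) ) · exp(itA/2). Then for every t ∈ ℝ, A₂(t) = Σ_{q=0}^∞ Σ_{j=2}^∞ ((−it)^{q+j} / (2^q q! j!)) · ( ((1−j)/2) · ad_A^q(ad_B^j(A)) + Σ_{p=0}^∞ ((−it)^p / (2^j p!)) · ad_A^q(ad_B^p(ad_A^j(B))) ), where the series converges absolutely in M_n(ℂ). -/

import Mathlib

set_option maxHeartbeats 1000000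
set_option linter.dupNamespace false


open scoped Matrix.Norms.L2Operator
open Matrix

namespace Stmt18

/-- `ad_X(Y) := [X,Y] = XY - YX`. -/
noncomputable def ad {n : ℕ} (X Y : Matrix (Fin n) (Fin n) ℂ) :
    Matrix (Fin n) (Fin n) ℂ :=
  X * Y - Y * X

/-- The exact error Hamiltonian of the second-order (Strang) splitting. -/
noncomputable def A2 {n : ℕ} (A B : Matrix (Fin n) (Fin n) ℂ) (t : ℝ) :
    Matrix (Fin n) (Fin n) ℂ :=
  NormedSpace.exp ((-(Complex.I * (t : ℂ) / 2)) • A) *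
    ((1 / 2 : ℂ) •
        (NormedSpace.exp ((-(Complex.I * (t : ℂ))) • B) * A *
            NormedSpace.exp ((Complex.I * (t : ℂ)) • B) - A) +
      NormedSpace.exp ((-(Complex.I * (t : ℂ))) • B) *
        (NormedSpace.exp ((-(Complex.I * (t : ℂ) / 2)) • A) * B *
            NormedSpace.exp ((Complex.I * (t : ℂ) / 2) • A) - B) *
        NormedSpace.exp ((Complex.I * (t : ℂ)) • B)) *
    NormedSpace.exp ((Complex.I * (t : ℂ) / 2) • A)

/-- The summand `((-it)^p / (2^j p!)) ad_A^q(ad_B^p(ad_A^j(B)))` of the innermost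
series, with `j ≥ 2` encoded as `j = j' + 2`. -/
noncomputable def innerP {n : ℕ} (A B : Matrix (Fin n) (Fin n) ℂ) (t : ℝ)
    (q j' p : ℕ) : Matrix (Fin n) (Fin n) ℂ :=
  ((-(Complex.I * (t : ℂ))) ^ p / ((2 : ℂ) ^ (j' + 2) * (p.factorial : ℂ))) •
    (ad A)^[q] ((ad B)^[p] ((ad A)^[j' + 2] B))

/-- The `(q, j)`-summand of the double series for `A₂(t)`, with `j ≥ 2` encoded as
`j = j' + 2`. -/
noncomputable def term {n : ℕ} (A B : Matrix (Fin n) (Fin n) ℂ) (t : ℝ)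
    (q j' : ℕ) : Matrix (Fin n) (Fin n) ℂ :=
  ((-(Complex.I * (t : ℂ))) ^ (q + (j' + 2)) /
      ((2 : ℂ) ^ q * (q.factorial : ℂ) * ((j' + 2).factorial : ℂ))) •
    (((1 - ((j' + 2 : ℕ) : ℂ)) / 2) • (ad A)^[q] ((ad B)^[j' + 2] A) +
      ∑' p : ℕ, innerP A B t q j' p)

variable {n : ℕ}

local notation "𝕄" => Matrix (Fin n) (Fin n) ℂ

/-! ### Algebraic facts about `ad` -/

lemma ad_iterate_adE (X Y : 𝕄) (m : ℕ) :
    (ad X)^[m] Y = ((LinearMap.mulLeft ℂ X - LinearMap.mulRight ℂ X) ^ m) Y := by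
  induction m with
  | zero => simp
  | succ m ih =>
      rw [Function.iterate_succ_apply', ih, pow_succ']
      rfl

/-- The iterate of `ad X` as a continuous linear map. -/
noncomputable def adCL (X : 𝕄) (m : ℕ) : 𝕄 →L[ℂ] 𝕄 :=
  LinearMap.toContinuousLinearMap ((LinearMap.mulLeft ℂ X - LinearMap.mulRight ℂ X) ^ m)

lemma adCL_apply (X : 𝕄) (m : ℕ) (Y : 𝕄) : adCL X m Y = (ad X)^[m] Y := by
  rw [ad_iterate_adE, adCL, LinearMap.coe_toContinuousLinearMap']

lemma ad_iterate_binomial (X Y : 𝕄) (m : ℕ) :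
    (ad X)^[m] Y =
      ∑ k ∈ Finset.range (m + 1), m.choose k • (X ^ k * Y * (-X) ^ (m - k)) := by
  rw [ad_iterate_adE]
  have h : LinearMap.mulLeft ℂ X - LinearMap.mulRight ℂ X =
      LinearMap.mulLeft ℂ X + LinearMap.mulRight ℂ (-X) := by
    ext Z
    simp [sub_eq_add_neg]
  have hc : Commute (LinearMap.mulLeft ℂ X) (LinearMap.mulRight ℂ (-X)) := by
    apply LinearMap.ext
    intro Z
    simp [Module.End.mul_apply, mul_assoc]
  rw [h, hc.add_pow]
  simp only [LinearMap.sum_apply, Module.End.mul_apply, LinearMap.pow_mulLeft,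
    LinearMap.pow_mulRight, Module.End.natCast_apply, LinearMap.mulLeft_apply,
    LinearMap.mulRight_apply, nsmul_eq_mul, mul_assoc]
  refine Finset.sum_congr rfl fun k _ => ?_
  rw [← mul_assoc, ← (Nat.cast_commute (m.choose k) (X ^ k)).eq, mul_assoc]

lemma ad_smul (z : ℂ) (X Y : 𝕄) : ad (z • X) Y = z • ad X Y := by
  simp [ad, smul_sub, smul_mul_assoc, mul_smul_comm]

lemma ad_smul_arg (X : 𝕄) (z : ℂ) (Y : 𝕄) : ad X (z • Y) = z • ad X Y := by
  simp [ad, smul_sub, smul_mul_assoc, mul_smul_comm]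

lemma ad_iterate_smul (z : ℂ) (X Y : 𝕄) (m : ℕ) :
    (ad (z • X))^[m] Y = z ^ m • (ad X)^[m] Y := by
  induction m with
  | zero => simp
  | succ m ih =>
      rw [Function.iterate_succ_apply', Function.iterate_succ_apply', ih,
        ad_smul, ad_smul_arg, smul_smul, pow_succ, mul_comm]

lemma ad_neg_flip (X Y : 𝕄) : ad X Y = -ad Y X := by
  simp [ad]

/-! ### Norm estimates -/

lemma norm_ad_apply_le (X Y : 𝕄) : ‖ad X Y‖ ≤ 2 * ‖X‖ * ‖Y‖ := by
  calc ‖X * Y - Y * X‖ ≤ ‖X * Y‖ + ‖Y * X‖ := norm_sub_le _ _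
  _ ≤ ‖X‖ * ‖Y‖ + ‖Y‖ * ‖X‖ := add_le_add (norm_mul_le _ _) (norm_mul_le _ _)
  _ = 2 * ‖X‖ * ‖Y‖ := by ring

lemma norm_ad_iterate_le (X Y : 𝕄) (m : ℕ) :
    ‖(ad X)^[m] Y‖ ≤ (2 * ‖X‖) ^ m * ‖Y‖ := by
  induction m with
  | zero => simp
  | succ m ih =>
      rw [Function.iterate_succ_apply', pow_succ']
      calc ‖ad X ((ad X)^[m] Y)‖ ≤ 2 * ‖X‖ * ‖(ad X)^[m] Y‖ := norm_ad_apply_le _ _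
      _ ≤ 2 * ‖X‖ * ((2 * ‖X‖) ^ m * ‖Y‖) :=
          mul_le_mul_of_nonneg_left ih (by positivity)
      _ = 2 * ‖X‖ * (2 * ‖X‖) ^ m * ‖Y‖ := by ring

lemma norm_pow_mul_le (X Y : 𝕄) (k : ℕ) : ‖X ^ k * Y‖ ≤ ‖X‖ ^ k * ‖Y‖ := by
  induction k with
  | zero => simp
  | succ k ih =>
      rw [pow_succ', mul_assoc, pow_succ']
      calc ‖X * (X ^ k * Y)‖ ≤ ‖X‖ * ‖X ^ k * Y‖ := norm_mul_le _ _
      _ ≤ ‖X‖ * (‖X‖ ^ k * ‖Y‖) := mul_le_mul_of_nonneg_left ih (norm_nonneg _)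
      _ = ‖X‖ * ‖X‖ ^ k * ‖Y‖ := by ring

/-! ### Summability helpers -/

lemma norm_coef (z : ℂ) (m : ℕ) :
    ‖(z ^ m / (m.factorial : ℂ))‖ = ‖z‖ ^ m / (m.factorial : ℝ) := by
  rw [norm_div, norm_pow]
  norm_num

lemma summable_norm_smul (z : ℂ) (v : ℕ → 𝕄) (K C : ℝ)
    (hv : ∀ m, ‖v m‖ ≤ K ^ m * C) :
    Summable fun m => ‖(z ^ m / (m.factorial : ℂ)) • v m‖ := by
  refine Summable.of_nonneg_of_le (fun _ => norm_nonneg _) (fun m => ?_)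
    ((Real.summable_pow_div_factorial (‖z‖ * K)).mul_right C)
  rw [norm_smul, norm_coef, mul_pow]
  calc ‖z‖ ^ m / (m.factorial : ℝ) * ‖v m‖
      ≤ ‖z‖ ^ m / (m.factorial : ℝ) * (K ^ m * C) :=
        mul_le_mul_of_nonneg_left (hv m) (by positivity)
    _ = ‖z‖ ^ m * K ^ m / (m.factorial : ℝ) * C := by ring

lemma summable_norm_smul_shift (z : ℂ) (v : ℕ → 𝕄) (K C : ℝ)
    (hv : ∀ m, ‖v m‖ ≤ K ^ (m + 1) * C) :
    Summable fun m => ‖(z ^ (m + 1) / ((m + 1).factorial : ℂ)) • v m‖ := by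
  refine Summable.of_nonneg_of_le (fun _ => norm_nonneg _) (fun m => ?_)
    ((((summable_nat_add_iff 1).2
      (Real.summable_pow_div_factorial (‖z‖ * K)))).mul_right C)
  rw [norm_smul, norm_coef, mul_pow]
  calc ‖z‖ ^ (m + 1) / ((m + 1).factorial : ℝ) * ‖v m‖
      ≤ ‖z‖ ^ (m + 1) / ((m + 1).factorial : ℝ) * (K ^ (m + 1) * C) :=
        mul_le_mul_of_nonneg_left (hv m) (by positivity)
    _ = ‖z‖ ^ (m + 1) * K ^ (m + 1) / ((m + 1).factorial : ℝ) * C := by ring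

lemma norm_ad2_le (X Z : 𝕄) (KZ : ℝ) (hZ : ‖Z‖ ≤ KZ) (m : ℕ) :
    ‖(ad X)^[m] Z‖ ≤ (2 * ‖X‖) ^ m * KZ :=
  (norm_ad_iterate_le X Z m).trans
    (mul_le_mul_of_nonneg_left hZ (by positivity))

/-! ### The exponential conjugation series -/

lemma summable_left (X Y : 𝕄) :
    Summable fun k : ℕ => ‖((k.factorial : ℂ))⁻¹ • (X ^ k * Y)‖ := by
  refine Summable.of_nonneg_of_le (fun k => norm_nonneg _)
    (fun k => ?_) ((Real.summable_pow_div_factorial ‖X‖).mul_right ‖Y‖)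
  rw [norm_smul]
  calc ‖((k.factorial : ℂ))⁻¹‖ * ‖X ^ k * Y‖
      ≤ (k.factorial : ℝ)⁻¹ * (‖X‖ ^ k * ‖Y‖) := by
        refine mul_le_mul ?_ (norm_pow_mul_le X Y k) (norm_nonneg _) (by positivity)
        simp
    _ = ‖X‖ ^ k / (k.factorial : ℝ) * ‖Y‖ := by ring

lemma exp_conj (X Y : 𝕄) :
    NormedSpace.exp X * Y * NormedSpace.exp (-X) =
      ∑' m : ℕ, ((m.factorial : ℂ))⁻¹ • (ad X)^[m] Y := by
  have hf : Summable fun k : ℕ => ‖((k.factorial : ℂ))⁻¹ • (X ^ k * Y)‖ :=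
    summable_left X Y
  have hg : Summable fun l : ℕ => ‖((l.factorial : ℂ))⁻¹ • (-X) ^ l‖ := by
    simpa using summable_left (-X) 1
  have h2 : NormedSpace.exp (-X) = ∑' l : ℕ, ((l.factorial : ℂ))⁻¹ • (-X) ^ l := by
    rw [NormedSpace.exp_eq_tsum ℂ]
  have h1 : NormedSpace.exp X * Y = ∑' k : ℕ, ((k.factorial : ℂ))⁻¹ • (X ^ k * Y) := by
    rw [NormedSpace.exp_eq_tsum ℂ]
    rw [← (NormedSpace.expSeries_summable' (𝕂 := ℂ) X).tsum_mul_right Y]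
    simp [smul_mul_assoc]
  rw [h1, h2, tsum_mul_tsum_eq_tsum_sum_antidiagonal_of_summable_norm hf hg]
  refine tsum_congr fun m => ?_
  rw [Finset.Nat.sum_antidiagonal_eq_sum_range_succ_mk, ad_iterate_binomial,
    Finset.smul_sum]
  refine Finset.sum_congr rfl fun k hk => ?_
  dsimp only
  have hk' : k ≤ m := Nat.lt_succ_iff.mp (Finset.mem_range.mp hk)
  rw [smul_mul_assoc, mul_smul_comm, smul_smul, smul_comm, ← Nat.cast_smul_eq_nsmul ℂ,
    smul_smul, mul_assoc]
  congr 1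
  have h2 : ((m.choose k : ℂ)) * (k.factorial : ℂ) * ((m - k).factorial : ℂ)
      = (m.factorial : ℂ) := by
    exact_mod_cast congrArg (Nat.cast (R := ℂ))
      (Nat.choose_mul_factorial_mul_factorial hk')
  have hkf : ((k.factorial : ℂ)) ≠ 0 := Nat.cast_ne_zero.2 k.factorial_ne_zero
  have hmkf : (((m - k).factorial : ℂ)) ≠ 0 := Nat.cast_ne_zero.2 (m - k).factorial_ne_zero
  have hmf : ((m.factorial : ℂ)) ≠ 0 := Nat.cast_ne_zero.2 m.factorial_ne_zero
  field_simp
  linear_combination -h2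

lemma summable_conj_norm (z : ℂ) (X Y : 𝕄) :
    Summable fun m : ℕ => ‖(z ^ m / (m.factorial : ℂ)) • (ad X)^[m] Y‖ :=
  summable_norm_smul z _ (2 * ‖X‖) ‖Y‖ (fun m => norm_ad_iterate_le X Y m)

lemma summable_conj (z : ℂ) (X Y : 𝕄) :
    Summable fun m : ℕ => (z ^ m / (m.factorial : ℂ)) • (ad X)^[m] Y :=
  (summable_conj_norm z X Y).of_norm

lemma exp_conj_smul (z : ℂ) (X Y : 𝕄) :
    NormedSpace.exp (z • X) * Y * NormedSpace.exp (-(z • X)) =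
      ∑' m : ℕ, (z ^ m / (m.factorial : ℂ)) • (ad X)^[m] Y := by
  rw [exp_conj]
  refine tsum_congr fun m => ?_
  rw [ad_iterate_smul, smul_smul, div_eq_mul_inv, mul_comm]

lemma exp_conj_sub (z : ℂ) (X Y : 𝕄) :
    NormedSpace.exp (z • X) * Y * NormedSpace.exp (-(z • X)) - Y =
      ∑' m : ℕ, (z ^ (m + 1) / ((m + 1).factorial : ℂ)) • (ad X)^[m + 1] Y := by
  rw [exp_conj_smul, Summable.tsum_eq_zero_add (summable_conj z X Y)]
  simp

/-! ### The double series rearrangement -/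

/-- `u A B c j = ∑' p, (c^p/p!) • ad_B^p (ad_A^j B)`. -/
noncomputable def u (A B : 𝕄) (c : ℂ) (j : ℕ) : 𝕄 :=
  ∑' p : ℕ, (c ^ p / (p.factorial : ℂ)) • (ad B)^[p] ((ad A)^[j] B)

/-- The `j'`-th term of the series for the central factor. -/
noncomputable def term0 (A B : 𝕄) (c : ℂ) (j' : ℕ) : 𝕄 :=
  (c ^ (j' + 2) / (((j' + 2).factorial : ℂ))) •
    (((1 - ((j' + 2 : ℕ) : ℂ)) / 2) • (ad B)^[j' + 2] A +
      (((2 : ℂ) ^ (j' + 2))⁻¹) • u A B c (j' + 2))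

lemma summable_w_norm (A B : 𝕄) (c : ℂ) (j : ℕ) :
    Summable fun p : ℕ =>
      ‖(c ^ p / (p.factorial : ℂ)) • (ad B)^[p] ((ad A)^[j] B)‖ :=
  summable_norm_smul c _ (2 * ‖B‖) ((2 * ‖A‖) ^ j * ‖B‖) fun p =>
    norm_ad2_le B _ _ (norm_ad_iterate_le A B j) p

lemma summable_w (A B : 𝕄) (c : ℂ) (j : ℕ) :
    Summable fun p : ℕ =>
      (c ^ p / (p.factorial : ℂ)) • (ad B)^[p] ((ad A)^[j] B) :=
  (summable_w_norm A B c j).of_norm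

noncomputable def Ecst (c : ℂ) (B : 𝕄) : ℝ :=
  ∑' p : ℕ, (‖c‖ * (2 * ‖B‖)) ^ p / (p.factorial : ℝ)

lemma Ecst_nonneg (c : ℂ) (B : 𝕄) : 0 ≤ Ecst c B :=
  tsum_nonneg fun p => by positivity

lemma norm_u_le (A B : 𝕄) (c : ℂ) (j : ℕ) :
    ‖u A B c j‖ ≤ (2 * ‖A‖) ^ j * (‖B‖ * Ecst c B) := by
  refine (norm_tsum_le_tsum_norm (summable_w_norm A B c j)).trans ?_
  have h1 : ∀ p : ℕ,
      ‖(c ^ p / (p.factorial : ℂ)) • (ad B)^[p] ((ad A)^[j] B)‖ ≤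
        (‖c‖ * (2 * ‖B‖)) ^ p / (p.factorial : ℝ) * ((2 * ‖A‖) ^ j * ‖B‖) := by
    intro p
    rw [norm_smul, norm_coef, mul_pow]
    calc ‖c‖ ^ p / (p.factorial : ℝ) * ‖(ad B)^[p] ((ad A)^[j] B)‖
        ≤ ‖c‖ ^ p / (p.factorial : ℝ) * ((2 * ‖B‖) ^ p * ((2 * ‖A‖) ^ j * ‖B‖)) :=
          mul_le_mul_of_nonneg_left
            (norm_ad2_le B _ _ (norm_ad_iterate_le A B j) p) (by positivity)
      _ = ‖c‖ ^ p * (2 * ‖B‖) ^ p / (p.factorial : ℝ) * ((2 * ‖A‖) ^ j * ‖B‖) := by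
          ring
  refine (Summable.tsum_le_tsum h1 (summable_w_norm A B c j)
    ((Real.summable_pow_div_factorial _).mul_right _)).trans ?_
  rw [tsum_mul_right]
  rw [show ((2 * ‖A‖) ^ j * (‖B‖ * Ecst c B)) =
    Ecst c B * ((2 * ‖A‖) ^ j * ‖B‖) from by ring]
  rfl

lemma u_one (A B : 𝕄) (c : ℂ) :
    u A B c 1 = -∑' p : ℕ, (c ^ p / (p.factorial : ℂ)) • (ad B)^[p + 1] A := by
  rw [u, ← tsum_neg]
  refine tsum_congr fun p => ?_
  have h1 : (ad A)^[1] B = -(ad B A) := by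
    rw [Function.iterate_one, ad_neg_flip]
  rw [h1, ← smul_neg]
  congr 1
  have h2 : (ad B)^[p] (-(ad B A)) = -((ad B)^[p] (ad B A)) := by
    rw [← adCL_apply, ← adCL_apply, map_neg]
  rw [h2, ← Function.iterate_succ_apply]

lemma summable_u_norm_shift (A B : 𝕄) (c : ℂ) (k : ℕ) :
    Summable fun j : ℕ =>
      ‖((c / 2) ^ (j + k) / (((j + k).factorial : ℂ))) • u A B c (j + k)‖ := by
  refine Summable.of_nonneg_of_le (fun _ => norm_nonneg _) (fun j => ?_)
    ((((summable_nat_add_iff k).2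
      (Real.summable_pow_div_factorial (‖c / 2‖ * (2 * ‖A‖))))).mul_right
        (‖B‖ * Ecst c B))
  rw [norm_smul, norm_coef, mul_pow]
  calc ‖c / 2‖ ^ (j + k) / (((j + k).factorial : ℝ)) * ‖u A B c (j + k)‖
      ≤ ‖c / 2‖ ^ (j + k) / (((j + k).factorial : ℝ)) *
          ((2 * ‖A‖) ^ (j + k) * (‖B‖ * Ecst c B)) :=
        mul_le_mul_of_nonneg_left (norm_u_le A B c (j + k)) (by positivity)
    _ = ‖c / 2‖ ^ (j + k) * (2 * ‖A‖) ^ (j + k) / (((j + k).factorial : ℝ)) *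
          (‖B‖ * Ecst c B) := by ring

/-! ### Double sum swap -/

lemma norm_G_le (A B : 𝕄) (c : ℂ) (p j : ℕ) :
    ‖((c ^ p / (p.factorial : ℂ)) * ((c / 2) ^ (j + 1) / (((j + 1).factorial : ℂ)))) •
        (ad B)^[p] ((ad A)^[j + 1] B)‖ ≤
      (‖c‖ * (2 * ‖B‖)) ^ p / (p.factorial : ℝ) *
        ((‖c / 2‖ * (2 * ‖A‖)) ^ (j + 1) / (((j + 1).factorial : ℝ)) * ‖B‖) := by
  rw [norm_smul, norm_mul, norm_coef, norm_coef]
  calc ‖c‖ ^ p / (p.factorial : ℝ) * (‖c / 2‖ ^ (j + 1) / (((j + 1).factorial : ℝ))) *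
        ‖(ad B)^[p] ((ad A)^[j + 1] B)‖
      ≤ ‖c‖ ^ p / (p.factorial : ℝ) * (‖c / 2‖ ^ (j + 1) / (((j + 1).factorial : ℝ))) *
          ((2 * ‖B‖) ^ p * ((2 * ‖A‖) ^ (j + 1) * ‖B‖)) :=
        mul_le_mul_of_nonneg_left
          (norm_ad2_le B _ _ (norm_ad_iterate_le A B (j + 1)) p) (by positivity)
    _ = _ := by rw [mul_pow, mul_pow]; ring

lemma summable_G1 (A B : 𝕄) (c : ℂ) :
    Summable fun j : ℕ =>
      (‖c / 2‖ * (2 * ‖A‖)) ^ (j + 1) / (((j + 1).factorial : ℝ)) * ‖B‖ :=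
  (((summable_nat_add_iff 1).2
    (Real.summable_pow_div_factorial (‖c / 2‖ * (2 * ‖A‖))))).mul_right ‖B‖

lemma summable_G_pair (A B : 𝕄) (c : ℂ) :
    Summable fun pj : ℕ × ℕ =>
      ‖((c ^ pj.1 / (pj.1.factorial : ℂ)) *
          ((c / 2) ^ (pj.2 + 1) / (((pj.2 + 1).factorial : ℂ)))) •
        (ad B)^[pj.1] ((ad A)^[pj.2 + 1] B)‖ := by
  refine Summable.of_nonneg_of_le (fun _ => norm_nonneg _) (fun pj => ?_)
    ((Real.summable_pow_div_factorial (‖c‖ * (2 * ‖B‖))).mul_of_nonneg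
      (summable_G1 A B c) (fun p => by positivity) (fun j => by positivity))
  exact norm_G_le A B c pj.1 pj.2

lemma summable_G_row (A B : 𝕄) (c : ℂ) (p : ℕ) :
    Summable fun j : ℕ =>
      ((c ^ p / (p.factorial : ℂ)) * ((c / 2) ^ (j + 1) / (((j + 1).factorial : ℂ)))) •
        (ad B)^[p] ((ad A)^[j + 1] B) := by
  refine Summable.of_norm (Summable.of_nonneg_of_le (fun _ => norm_nonneg _)
    (fun j => norm_G_le A B c p j) ?_)
  exact (summable_G1 A B c).mul_left _


lemma coef_identity (c : ℂ) (j' : ℕ) :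
    1/2 * (c^(j'+2) / ((j'+2).factorial : ℂ)) - c/2 * (c^(j'+1)/((j'+1).factorial : ℂ))
      = c^(j'+2)/((j'+2).factorial : ℂ) * ((1 - ((j'+2:ℕ):ℂ))/2) := by
  have hfact : (((j'+2).factorial : ℂ)) = ((j'+2:ℕ) : ℂ) * ((j'+1).factorial : ℂ) := by
    exact_mod_cast congrArg (Nat.cast (R := ℂ)) (Nat.factorial_succ (j'+1))
  have h1 : (((j'+1).factorial : ℂ)) ≠ 0 := Nat.cast_ne_zero.2 (Nat.factorial_ne_zero _)
  have h2 : (((j'+2:ℕ)) : ℂ) ≠ 0 := Nat.cast_ne_zero.2 (by omega)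
  rw [hfact, pow_succ c (j'+1)]
  push_cast at h2 ⊢
  field_simp

lemma norm_half_coef (j' : ℕ) : ‖(1 - ((j'+2:ℕ):ℂ))/2‖ ≤ ((j':ℝ)+2) := by
  rw [norm_div]
  have h1 : ‖(1 - ((j'+2:ℕ):ℂ))‖ ≤ 1 + ((j':ℝ)+2) := by
    refine (norm_sub_le _ _).trans ?_
    rw [norm_one, Complex.norm_natCast]
    push_cast
    linarith
  have h2 : ‖(2:ℂ)‖ = 2 := by norm_num
  rw [h2]
  nlinarith [h1, norm_nonneg (1 - ((j'+2:ℕ):ℂ))]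

lemma fact_real (j' : ℕ) : (((j'+2).factorial : ℝ)) = ((j':ℝ)+2) * ((j'+1).factorial : ℝ) := by
  have := Nat.factorial_succ (j'+1)
  push_cast [this]
  ring

lemma summable_h8_norm (A B : 𝕄) (c : ℂ) :
    Summable fun j' : ℕ =>
      ‖(c ^ (j' + 2) / (((j' + 2).factorial : ℂ))) •
        (((1 - ((j' + 2 : ℕ) : ℂ)) / 2) • (ad B)^[j' + 2] A)‖ := by
  refine Summable.of_nonneg_of_le (fun _ => norm_nonneg _) (fun j' => ?_)
    (((((summable_nat_add_iff 1).2
      (Real.summable_pow_div_factorial (‖c‖ * (2 * ‖B‖)))).mul_right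
        ‖A‖)).mul_left (‖c‖ * (2 * ‖B‖)))
  rw [norm_smul, norm_coef, norm_smul]
  calc ‖c‖ ^ (j'+2) / (((j'+2).factorial : ℝ)) *
        (‖(1 - ((j'+2:ℕ):ℂ))/2‖ * ‖(ad B)^[j'+2] A‖)
      ≤ ‖c‖ ^ (j'+2) / (((j'+2).factorial : ℝ)) *
          (((j':ℝ)+2) * ((2*‖B‖)^(j'+2) * ‖A‖)) := by
        refine mul_le_mul_of_nonneg_left ?_ (by positivity)
        exact mul_le_mul (norm_half_coef j') (norm_ad_iterate_le B A (j'+2))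
          (norm_nonneg _) (by positivity)
    _ = ‖c‖ * (2*‖B‖) * ((‖c‖*(2*‖B‖)) ^ (j'+1) / (((j'+1).factorial : ℝ)) * ‖A‖) := by
        rw [fact_real]
        have h1 : (((j'+1).factorial : ℝ)) ≠ 0 := Nat.cast_ne_zero.2 (Nat.factorial_ne_zero _)
        have h2 : ((j':ℝ)+2) ≠ 0 := by positivity
        field_simp
        ring

/-! ### The central factor as a single series -/

lemma C_eq (A B : 𝕄) (c : ℂ) :
    (1 / 2 : ℂ) • (NormedSpace.exp (c • B) * A * NormedSpace.exp (-(c • B)) - A) +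
      NormedSpace.exp (c • B) *
        (NormedSpace.exp ((c / 2) • A) * B * NormedSpace.exp (-((c / 2) • A)) - B) *
        NormedSpace.exp (-(c • B)) =
      ∑' j' : ℕ, term0 A B c j' := by
  -- summability of the inner `A`-series
  have hVsum : Summable fun j : ℕ =>
      ((c / 2) ^ (j + 1) / (((j + 1).factorial : ℂ))) • (ad A)^[j + 1] B :=
    (summable_norm_smul_shift (c / 2) _ (2 * ‖A‖) ‖B‖
      (fun j => norm_ad_iterate_le A B (j + 1))).of_norm
  rw [exp_conj_sub c B A, exp_conj_sub (c / 2) A B, exp_conj_smul c B]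
  -- step 1: push `(ad B)^[p]` inside the tsum and fold scalars
  have h4 : (∑' p : ℕ, (c ^ p / (p.factorial : ℂ)) •
        (ad B)^[p] (∑' j : ℕ,
          ((c / 2) ^ (j + 1) / (((j + 1).factorial : ℂ))) • (ad A)^[j + 1] B))
      = ∑' (p : ℕ) (j : ℕ),
          ((c ^ p / (p.factorial : ℂ)) *
            ((c / 2) ^ (j + 1) / (((j + 1).factorial : ℂ)))) •
            (ad B)^[p] ((ad A)^[j + 1] B) := by
    refine tsum_congr fun p => ?_
    rw [← adCL_apply, ContinuousLinearMap.map_tsum _ hVsum]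
    rw [← Summable.tsum_const_smul _ ?_]
    · refine tsum_congr fun j => ?_
      rw [_root_.map_smul, adCL_apply, smul_smul]
    · -- Summable fun j => adCL B p (coef • adA^[j+1] B)
      refine Summable.of_norm ?_
      refine Summable.of_nonneg_of_le (fun _ => norm_nonneg _) (fun j => ?_)
        ((summable_G1 A B c).mul_left ((2 * ‖B‖) ^ p))
      rw [_root_.map_smul, adCL_apply, norm_smul, norm_coef]
      calc ‖c / 2‖ ^ (j + 1) / (((j + 1).factorial : ℝ)) *
            ‖(ad B)^[p] ((ad A)^[j + 1] B)‖
          ≤ ‖c / 2‖ ^ (j + 1) / (((j + 1).factorial : ℝ)) *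
              ((2 * ‖B‖) ^ p * ((2 * ‖A‖) ^ (j + 1) * ‖B‖)) :=
            mul_le_mul_of_nonneg_left
              (norm_ad2_le B _ _ (norm_ad_iterate_le A B (j + 1)) p) (by positivity)
        _ = (2 * ‖B‖) ^ p *
              ((‖c / 2‖ * (2 * ‖A‖)) ^ (j + 1) / (((j + 1).factorial : ℝ)) * ‖B‖) := by
            rw [mul_pow]; ring
  -- step 2: swap the two sums
  have h5 : (∑' (p : ℕ) (j : ℕ),
        ((c ^ p / (p.factorial : ℂ)) *
          ((c / 2) ^ (j + 1) / (((j + 1).factorial : ℂ)))) •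
          (ad B)^[p] ((ad A)^[j + 1] B))
      = ∑' (j : ℕ) (p : ℕ),
          ((c ^ p / (p.factorial : ℂ)) *
            ((c / 2) ^ (j + 1) / (((j + 1).factorial : ℂ)))) •
            (ad B)^[p] ((ad A)^[j + 1] B) :=
    by
    refine (Summable.tsum_comm (f := fun p j =>
      ((c ^ p / (p.factorial : ℂ)) *
        ((c / 2) ^ (j + 1) / (((j + 1).factorial : ℂ)))) •
        (ad B)^[p] ((ad A)^[j + 1] B)) ?_).symm
    exact (summable_G_pair A B c).of_norm
  -- step 3: inner sums are `u`
  have h6 : ∀ j : ℕ, (∑' p : ℕ,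
        ((c ^ p / (p.factorial : ℂ)) *
          ((c / 2) ^ (j + 1) / (((j + 1).factorial : ℂ)))) •
          (ad B)^[p] ((ad A)^[j + 1] B))
      = ((c / 2) ^ (j + 1) / (((j + 1).factorial : ℂ))) • u A B c (j + 1) := by
    intro j
    rw [u, ← Summable.tsum_const_smul _ (summable_w A B c (j + 1))]
    refine tsum_congr fun p => ?_
    rw [smul_smul, mul_comm]
  rw [h4, h5]
  rw [tsum_congr h6]
  -- step 4: peel off the `j = 0` term
  have husum : Summable fun j : ℕ =>
      ((c / 2) ^ (j + 1) / (((j + 1).factorial : ℂ))) • u A B c (j + 1) := by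
    have := (summable_u_norm_shift A B c 1).of_norm
    exact this
  rw [Summable.tsum_eq_zero_add husum]
  have h7 : ((c / 2) ^ (0 + 1) / (((0 + 1).factorial : ℂ))) • u A B c (0 + 1)
      = (c / 2) • u A B c 1 := by norm_num
  rw [h7, u_one, smul_neg]
  -- step 5: combine the two `ad_B^{p+1} A` series
  have hS1sum : Summable fun p : ℕ =>
      (c ^ (p + 1) / (((p + 1).factorial : ℂ))) • (ad B)^[p + 1] A :=
    (summable_norm_smul_shift c _ (2 * ‖B‖) ‖A‖
      (fun p => norm_ad_iterate_le B A (p + 1))).of_norm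
  have hTsum : Summable fun p : ℕ =>
      (c ^ p / (p.factorial : ℂ)) • (ad B)^[p + 1] A :=
    (summable_norm_smul c _ (2 * ‖B‖) (2 * ‖B‖ * ‖A‖) (fun p => by
      have := norm_ad_iterate_le B A (p + 1)
      calc ‖(ad B)^[p + 1] A‖ ≤ (2 * ‖B‖) ^ (p + 1) * ‖A‖ := this
      _ = (2 * ‖B‖) ^ p * (2 * ‖B‖ * ‖A‖) := by rw [pow_succ]; ring)).of_norm
  have h8 : (1 / 2 : ℂ) •
        (∑' p : ℕ, (c ^ (p + 1) / (((p + 1).factorial : ℂ))) • (ad B)^[p + 1] A) +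
        -((c / 2) • ∑' p : ℕ, (c ^ p / (p.factorial : ℂ)) • (ad B)^[p + 1] A)
      = ∑' j' : ℕ, (c ^ (j' + 2) / (((j' + 2).factorial : ℂ))) •
          (((1 - ((j' + 2 : ℕ) : ℂ)) / 2) • (ad B)^[j' + 2] A) := by
    rw [← Summable.tsum_const_smul _ hS1sum, ← Summable.tsum_const_smul _ hTsum, ← tsum_neg,
      ← Summable.tsum_add (hS1sum.const_smul _) ((hTsum.const_smul _)).neg]
    have hφ : ∀ p : ℕ,
        (1 / 2 : ℂ) • ((c ^ (p + 1) / (((p + 1).factorial : ℂ))) • (ad B)^[p + 1] A) +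
          -((c / 2) • ((c ^ p / (p.factorial : ℂ)) • (ad B)^[p + 1] A))
        = ((1 / 2) * (c ^ (p + 1) / (((p + 1).factorial : ℂ))) -
            (c / 2) * (c ^ p / (p.factorial : ℂ))) • (ad B)^[p + 1] A := by
      intro p
      rw [smul_smul, smul_smul, ← neg_smul, ← add_smul]
      ring_nf
    rw [tsum_congr hφ]
    have hφsum : Summable fun p : ℕ =>
        ((1 / 2) * (c ^ (p + 1) / (((p + 1).factorial : ℂ))) -
          (c / 2) * (c ^ p / (p.factorial : ℂ))) • (ad B)^[p + 1] A := by
      have := ((hS1sum.const_smul ((1:ℂ)/2)).add ((hTsum.const_smul ((c:ℂ)/2)).neg))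
      refine this.congr fun p => ?_
      rw [smul_smul, smul_smul, ← neg_smul, ← add_smul]
      ring_nf
    rw [Summable.tsum_eq_zero_add hφsum]
    have hz : ((1 / 2) * (c ^ (0 + 1) / (((0 + 1).factorial : ℂ))) -
        (c / 2) * (c ^ 0 / ((Nat.factorial 0 : ℂ)))) = 0 := by
      norm_num [Nat.factorial]
      ring
    rw [show (0:ℕ) + 1 = 1 from rfl] at hz
    simp only [hz, zero_smul, zero_add]
    refine tsum_congr fun j' => ?_
    rw [smul_smul]
    congr 1
    exact coef_identity c j'
  -- step 6: assemble
  rw [← add_assoc, h8, ← Summable.tsum_add ?_ ?_]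
  · refine tsum_congr fun j' => ?_
    rw [term0, smul_add]
    congr 1
    rw [smul_smul]
    show ((c / 2) ^ (j' + 2) / (((j' + 2).factorial : ℂ))) • u A B c (j' + 2) = _
    congr 1
    rw [div_pow]
    ring
  · exact (summable_h8_norm A B c).of_norm
  · exact (summable_u_norm_shift A B c 2).of_norm

/-! ### Pushing `ad_A^q` through the series -/

lemma summable_w3_norm (A B : 𝕄) (c : ℂ) (q j : ℕ) :
    Summable fun p : ℕ =>
      ‖(c ^ p / (p.factorial : ℂ)) • (ad A)^[q] ((ad B)^[p] ((ad A)^[j] B))‖ := by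
  refine summable_norm_smul c _ (2 * ‖B‖)
    ((2 * ‖A‖) ^ q * ((2 * ‖A‖) ^ j * ‖B‖)) (fun p => ?_)
  calc ‖(ad A)^[q] ((ad B)^[p] ((ad A)^[j] B))‖
      ≤ (2 * ‖A‖) ^ q * ((2 * ‖B‖) ^ p * ((2 * ‖A‖) ^ j * ‖B‖)) :=
        norm_ad2_le A _ _ (norm_ad2_le B _ _ (norm_ad_iterate_le A B j) p) q
    _ = (2 * ‖B‖) ^ p * ((2 * ‖A‖) ^ q * ((2 * ‖A‖) ^ j * ‖B‖)) := by ring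

lemma push_q (A B : 𝕄) (c : ℂ) (q j' : ℕ) :
    ((c / 2) ^ q / (q.factorial : ℂ)) • (ad A)^[q] (term0 A B c j') =
      (c ^ (q + (j' + 2)) /
          ((2 : ℂ) ^ q * (q.factorial : ℂ) * (((j' + 2).factorial : ℂ)))) •
        (((1 - ((j' + 2 : ℕ) : ℂ)) / 2) • (ad A)^[q] ((ad B)^[j' + 2] A) +
          ∑' p : ℕ, (c ^ p / ((2 : ℂ) ^ (j' + 2) * (p.factorial : ℂ))) •
            (ad A)^[q] ((ad B)^[p] ((ad A)^[j' + 2] B))) := by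
  rw [term0, ← adCL_apply, _root_.map_smul, map_add, _root_.map_smul, _root_.map_smul,
    u, ContinuousLinearMap.map_tsum _ (summable_w A B c (j' + 2)), smul_smul]
  have hcongr : ∀ p : ℕ,
      adCL A q ((c ^ p / (p.factorial : ℂ)) • (ad B)^[p] ((ad A)^[j' + 2] B)) =
        (c ^ p / (p.factorial : ℂ)) • (ad A)^[q] ((ad B)^[p] ((ad A)^[j' + 2] B)) :=
    fun p => by rw [_root_.map_smul, adCL_apply]
  rw [tsum_congr hcongr]
  congr 1
  · rw [div_pow, pow_add]
    ring
  congr 1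
  · rw [adCL_apply]
  · rw [← Summable.tsum_const_smul _ ((summable_w3_norm A B c q (j' + 2)).of_norm)]
    refine tsum_congr fun p => ?_
    rw [smul_smul]
    congr 1
    ring

lemma summable_term0_norm (A B : 𝕄) (c : ℂ) :
    Summable fun j' : ℕ => ‖term0 A B c j'‖ := by
  refine Summable.of_nonneg_of_le (fun _ => norm_nonneg _) (fun j' => ?_)
    ((summable_h8_norm A B c).add (summable_u_norm_shift A B c 2))
  rw [term0, smul_add]
  refine (norm_add_le _ _).trans ?_
  refine add_le_add le_rfl ?_
  rw [smul_smul]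
  have hsc : c ^ (j' + 2) / (((j' + 2).factorial : ℂ)) * ((2 : ℂ) ^ (j' + 2))⁻¹
      = (c / 2) ^ (j' + 2) / (((j' + 2).factorial : ℂ)) := by
    rw [div_pow]
    ring
  rw [hsc]

/-! ### Norm bound for `term` -/

lemma term_as_push (A B : 𝕄) (t : ℝ) (q j' : ℕ) :
    term A B t q j' =
      (((-(Complex.I * (t : ℂ))) / 2) ^ q / (q.factorial : ℂ)) •
        (ad A)^[q] (term0 A B (-(Complex.I * (t : ℂ))) j') := by
  exact (push_q A B (-(Complex.I * (t : ℂ))) q j').symm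

lemma norm_term_le (A B : 𝕄) (t : ℝ) (q j' : ℕ) :
    ‖term A B t q j'‖ ≤
      (‖(-(Complex.I * (t : ℂ))) / 2‖ * (2 * ‖A‖)) ^ q / (q.factorial : ℝ) *
        ‖term0 A B (-(Complex.I * (t : ℂ))) j'‖ := by
  rw [term_as_push, norm_smul, norm_coef, mul_pow]
  calc ‖(-(Complex.I * (t : ℂ))) / 2‖ ^ q / (q.factorial : ℝ) *
        ‖(ad A)^[q] (term0 A B (-(Complex.I * (t : ℂ))) j')‖
      ≤ ‖(-(Complex.I * (t : ℂ))) / 2‖ ^ q / (q.factorial : ℝ) *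
          ((2 * ‖A‖) ^ q * ‖term0 A B (-(Complex.I * (t : ℂ))) j'‖) :=
        mul_le_mul_of_nonneg_left (norm_ad_iterate_le A _ q) (by positivity)
    _ = _ := by ring

/-- the fully expanded, absolutely convergent series for `A₂(t)`. -/
theorem stmt18 {n : ℕ} (A B : Matrix (Fin n) (Fin n) ℂ) :
    ∀ t : ℝ,
      (∀ q j', Summable fun p : ℕ => ‖innerP A B t q j' p‖) ∧
      (Summable fun qj : ℕ × ℕ => ‖term A B t qj.1 qj.2‖) ∧
      A2 A B t = ∑' (q : ℕ) (j' : ℕ), term A B t q j' := by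
  intro t
  refine ⟨?_, ?_, ?_⟩
  · -- summability of the innermost series
    intro q j'
    refine Summable.of_nonneg_of_le (fun _ => norm_nonneg _) (fun p => ?_)
      ((Real.summable_pow_div_factorial
          (‖-(Complex.I * (t : ℂ))‖ * (2 * ‖B‖))).mul_right
        ((2 * ‖A‖) ^ q * ((2 * ‖A‖) ^ (j' + 2) * ‖B‖)))
    rw [innerP, norm_smul]
    have h1 : ‖(-(Complex.I * (t : ℂ))) ^ p / ((2 : ℂ) ^ (j' + 2) * (p.factorial : ℂ))‖
        ≤ ‖-(Complex.I * (t : ℂ))‖ ^ p / (p.factorial : ℝ) := by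
      rw [norm_div, norm_pow, norm_mul, norm_pow, Complex.norm_natCast]
      have h2 : ‖(2 : ℂ)‖ = 2 := by norm_num
      rw [h2]
      apply div_le_div_of_nonneg_left (by positivity) (by positivity)
      calc (p.factorial : ℝ) = 1 * (p.factorial : ℝ) := (one_mul _).symm
        _ ≤ 2 ^ (j' + 2) * (p.factorial : ℝ) := by
            have h3 : (1 : ℝ) ≤ 2 ^ (j' + 2) := one_le_pow₀ (by norm_num)
            have h4 : (0 : ℝ) ≤ (p.factorial : ℝ) := by positivity
            nlinarith
    calc ‖(-(Complex.I * (t : ℂ))) ^ p / ((2 : ℂ) ^ (j' + 2) * (p.factorial : ℂ))‖ *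
          ‖(ad A)^[q] ((ad B)^[p] ((ad A)^[j' + 2] B))‖
        ≤ ‖-(Complex.I * (t : ℂ))‖ ^ p / (p.factorial : ℝ) *
            ((2 * ‖A‖) ^ q * ((2 * ‖B‖) ^ p * ((2 * ‖A‖) ^ (j' + 2) * ‖B‖))) :=
          mul_le_mul h1
            (norm_ad2_le A _ _
              (norm_ad2_le B _ _ (norm_ad_iterate_le A B (j' + 2)) p) q)
            (norm_nonneg _) (by positivity)
      _ = (‖-(Complex.I * (t : ℂ))‖ * (2 * ‖B‖)) ^ p / (p.factorial : ℝ) *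
            ((2 * ‖A‖) ^ q * ((2 * ‖A‖) ^ (j' + 2) * ‖B‖)) := by
          rw [mul_pow]; ring
  · -- summability of the double series
    refine Summable.of_nonneg_of_le (fun _ => norm_nonneg _) (fun qj => ?_)
      ((Real.summable_pow_div_factorial
          (‖(-(Complex.I * (t : ℂ))) / 2‖ * (2 * ‖A‖))).mul_of_nonneg
        (summable_term0_norm A B (-(Complex.I * (t : ℂ))))
        (fun q => by positivity) (fun j' => norm_nonneg _))
    exact norm_term_le A B t qj.1 qj.2
  · -- the series identity
    have e1 : (-(Complex.I * (t : ℂ) / 2)) • A = ((-(Complex.I * (t : ℂ))) / 2) • A := by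
      rw [neg_div]
    have e2 : (Complex.I * (t : ℂ) / 2) • A = -(((-(Complex.I * (t : ℂ))) / 2) • A) := by
      rw [← neg_smul]
      congr 1
      ring
    have e3 : (Complex.I * (t : ℂ)) • B = -((-(Complex.I * (t : ℂ))) • B) := by
      rw [← neg_smul]
      congr 1
      ring
    unfold A2
    rw [e1, e2, e3, C_eq A B (-(Complex.I * (t : ℂ))),
      exp_conj_smul ((-(Complex.I * (t : ℂ))) / 2) A]
    refine tsum_congr fun q => ?_
    have hmapped : Summable fun j' : ℕ =>
        adCL A q (term0 A B (-(Complex.I * (t : ℂ))) j') := by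
      refine Summable.of_norm (Summable.of_nonneg_of_le (fun _ => norm_nonneg _)
        (fun j' => ?_) ((summable_term0_norm A B (-(Complex.I * (t : ℂ)))).mul_left ((2 * ‖A‖) ^ q)))
      rw [adCL_apply]
      exact norm_ad_iterate_le A _ q
    rw [← adCL_apply,
      ContinuousLinearMap.map_tsum _ ((summable_term0_norm A B (-(Complex.I * (t : ℂ)))).of_norm),
      ← Summable.tsum_const_smul _ hmapped]
    refine tsum_congr fun j' => ?_
    rw [adCL_apply]
    exact push_q A B (-(Complex.I * (t : ℂ))) q j'

end Stmt18
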